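/- Let Φ_tr ∈ ℝ^{n_x×n_x} and Γ_tr ∈ ℝ^{n_x×n_u}, and consider data batches indexed by i = 0,1,…,N: matrices X_i⁺ ∈ ℝ^{n_x×T_i}, X_i⁻ ∈ ℝ^{n_x×T_i}, U_i⁻ ∈ ℝ^{n_u×T_i}, noise sets M_w^{(i)} ⊆ ℝ^{n_x×T_i}, and right inverses D_i' ∈ ℝ^{T_i×(n_x+n_u)} of D_i = [X_i⁻; U_i⁻] (i.e., D_i·D_i' = I). Assume that for each i there exists W_i ∈ M_w^{(i)} with X_i⁺ = Φ_tr X_i⁻ + Γ_tr U_i⁻ + W_i. Define M_i^Σ = { (X_i⁺ − W)·D_i' : W ∈ M_w^{(i)} } and the refined model sets M̂_0^Σ = M_0^Σ and M̂_i^Σ = M_i^Σ ∩ M̂_{i-1}^Σ for i ≥ 1. Then [Φ_tr Γ_tr] ∈ M̂_i^Σ for every i ∈ {0,1,…,N}. -/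

import Mathlib

/-- Iterative refinement of the set of models for LTI systems: if every data batch
is generated by the true system with noise in the admissible noise set, then the
true model `[Φ_tr Γ_tr]` belongs to every refined model set `M̂_i^Σ`, obtained by
intersecting the data-consistent model sets of successive batches. -/
theorem stmt3 {nx nu : ℕ} (N : ℕ) (T : ℕ → ℕ)
    (Φtr : Matrix (Fin nx) (Fin nx) ℝ) (Γtr : Matrix (Fin nx) (Fin nu) ℝ)
    (Xp Xm : ∀ i : ℕ, Matrix (Fin nx) (Fin (T i)) ℝ)
    (Um : ∀ i : ℕ, Matrix (Fin nu) (Fin (T i)) ℝ)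
    (Mw : ∀ i : ℕ, Set (Matrix (Fin nx) (Fin (T i)) ℝ))
    (D' : ∀ i : ℕ, Matrix (Fin (T i)) (Fin nx ⊕ Fin nu) ℝ)
    (hD' : ∀ i ≤ N, Matrix.fromRows (Xm i) (Um i) * D' i = 1)
    (hdata : ∀ i ≤ N, ∃ W ∈ Mw i, Xp i = Φtr * Xm i + Γtr * Um i + W)
    (M : ℕ → Set (Matrix (Fin nx) (Fin nx ⊕ Fin nu) ℝ))
    (hM : ∀ i, M i = { Mm | ∃ W ∈ Mw i, Mm = (Xp i - W) * D' i })
    (Mhat : ℕ → Set (Matrix (Fin nx) (Fin nx ⊕ Fin nu) ℝ))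
    (hMhat0 : Mhat 0 = M 0)
    (hMhatS : ∀ i : ℕ, Mhat (i + 1) = M (i + 1) ∩ Mhat i) :
    ∀ i ≤ N, Matrix.fromCols Φtr Γtr ∈ Mhat i := by
  have hmem : ∀ i ≤ N, Matrix.fromCols Φtr Γtr ∈ M i := by
    intro i hi
    obtain ⟨W, hW, hX⟩ := hdata i hi
    rw [hM]
    refine ⟨W, hW, ?_⟩
    have : Xp i - W = Matrix.fromCols Φtr Γtr * Matrix.fromRows (Xm i) (Um i) := by
      rw [hX, Matrix.fromCols_mul_fromRows]
      abel
    rw [this, Matrix.mul_assoc, hD' i hi, Matrix.mul_one]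
  intro i
  induction i with
  | zero => intro h; rw [hMhat0]; exact hmem 0 h
  | succ n ih =>
    intro h
    rw [hMhatS]
    exact ⟨hmem _ h, ih (Nat.le_of_succ_le h)⟩
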